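/- Let 𝒪 be the ring of integers of an imaginary quadratic field F. Let b₁, b₂ ∈ 𝒪 be such that neither b₁ nor b₂ is divisible in 𝒪 by any natural number n > 1, and suppose that b₂ and N(b₁) := b₁·conj(b₁) generate the unit ideal, i.e. b₂𝒪 + N(b₁)𝒪 = 𝒪. Then b₁·b₂ is not divisible in 𝒪 by any natural number n > 1. -/
import Mathlib


noncomputable section

/-- ω = (d + √d)/2 where √d = i·√(-d) for the discriminant d < 0. -/
def omg (d : ℤ) : ℂ := ((d : ℂ) + Complex.I * (Real.sqrt (-(d : ℝ)) : ℝ)) / 2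

/-- d is the discriminant of an imaginary quadratic field. -/
def IsDisc (d : ℤ) : Prop :=
  d < 0 ∧ ((d % 4 = 1 ∧ Squarefree d) ∨
    (d % 4 = 0 ∧ Squarefree (d / 4) ∧ (d / 4 % 4 = 2 ∨ d / 4 % 4 = 3)))

/-- The ring of integers 𝒪 = ℤ + ℤω of the imaginary quadratic field of
discriminant d, as a subset of ℂ. -/
def Oint (d : ℤ) : Set ℂ := {z | ∃ a b : ℤ, z = (a : ℂ) + (b : ℂ) * omg d}

/-- Q is a nonzero ideal of 𝒪. -/
def IsIdealOf (d : ℤ) (Q : Set ℂ) : Prop :=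
  Q ⊆ Oint d ∧ (0 : ℂ) ∈ Q ∧ (∃ q ∈ Q, q ≠ 0) ∧
    (∀ x ∈ Q, ∀ y ∈ Q, x + y ∈ Q) ∧ (∀ r ∈ Oint d, ∀ q ∈ Q, r * q ∈ Q)

lemma omg_sq (d : ℤ) (hd : IsDisc d) :
    ∃ c : ℤ, omg d ^ 2 = (d : ℂ) * omg d + (c : ℂ) := by
  obtain ⟨hd0, h4⟩ := hd
  have h4 : d % 4 = 1 ∨ d % 4 = 0 := by tauto
  have hs : ((Real.sqrt (-(d:ℝ)) : ℝ) : ℂ) ^ 2 = -(d : ℂ) := by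
    rw [← Complex.ofReal_pow, Real.sq_sqrt (neg_nonneg.mpr (by exact_mod_cast hd0.le))]
    push_cast; ring
  obtain ⟨k, hk⟩ : ∃ k : ℤ, d - d ^ 2 = 4 * k := by
    rcases h4 with h | h
    · obtain ⟨q, hq⟩ : ∃ q, d = 4 * q + 1 := ⟨d / 4, by omega⟩
      exact ⟨-4 * q ^ 2 - q, by subst hq; ring⟩
    · obtain ⟨q, hq⟩ : ∃ q, d = 4 * q := ⟨d / 4, by omega⟩
      exact ⟨q - 4 * q ^ 2, by subst hq; ring⟩
  refine ⟨k, ?_⟩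
  have hkC : (d : ℂ) - (d:ℂ)^2 = 4 * (k:ℂ) := by exact_mod_cast hk
  have hI : (Complex.I)^2 = -1 := Complex.I_sq
  unfold omg
  linear_combination (Complex.I^2/4) * hs - ((d:ℂ)/4) * hI + (1/4) * hkC

lemma star_omg (d : ℤ) : star (omg d) = (d : ℂ) - omg d := by
  unfold omg
  simp only [Complex.star_def, map_div₀, map_add, map_mul, Complex.conj_I,
    Complex.conj_ofReal, map_intCast, map_ofNat]
  ring

lemma Oint_intcast (d m : ℤ) : (m : ℂ) ∈ Oint d := ⟨m, 0, by simp⟩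

lemma Oint_add {d : ℤ} {x y : ℂ} (hx : x ∈ Oint d) (hy : y ∈ Oint d) :
    x + y ∈ Oint d := by
  obtain ⟨a, b, rfl⟩ := hx; obtain ⟨a', b', rfl⟩ := hy
  exact ⟨a + a', b + b', by push_cast; ring⟩

lemma Oint_mul {d : ℤ} (hc : ∃ c : ℤ, omg d ^ 2 = (d : ℂ) * omg d + (c : ℂ))
    {x y : ℂ} (hx : x ∈ Oint d) (hy : y ∈ Oint d) : x * y ∈ Oint d := by
  obtain ⟨c, hc⟩ := hc
  obtain ⟨a, b, rfl⟩ := hx; obtain ⟨a', b', rfl⟩ := hy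
  refine ⟨a * a' + b * b' * c, a * b' + a' * b + b * b' * d, ?_⟩
  push_cast
  linear_combination (b : ℂ) * b' * hc

lemma Oint_star {d : ℤ} {x : ℂ} (hx : x ∈ Oint d) : star x ∈ Oint d := by
  obtain ⟨a, b, rfl⟩ := hx
  refine ⟨a + b * d, -b, ?_⟩
  simp only [star_add, star_mul', star_intCast, star_omg]
  push_cast; ring

lemma Oint_norm {d : ℤ} (hc : ∃ c : ℤ, omg d ^ 2 = (d : ℂ) * omg d + (c : ℂ))
    {x : ℂ} (hx : x ∈ Oint d) : ∃ m : ℤ, x * star x = (m : ℂ) := by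
  obtain ⟨c, hc⟩ := hc
  obtain ⟨a, b, rfl⟩ := hx
  refine ⟨a ^ 2 + a * b * d - b ^ 2 * c, ?_⟩
  simp only [star_add, star_mul', star_intCast, star_omg]
  push_cast
  linear_combination (-(b:ℂ)^2) * hc

/-- if b₁, b₂ are each not divisible by any natural number > 1 and
b₂𝒪 + N(b₁)𝒪 = 𝒪, then b₁b₂ is not divisible by any natural number > 1. -/
theorem stmt18 (d : ℤ) (hd : IsDisc d) (b₁ b₂ : ℂ)
    (h₁ : b₁ ∈ Oint d) (h₂ : b₂ ∈ Oint d)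
    (hnd₁ : ∀ n : ℕ, 1 < n → ¬ ∃ y ∈ Oint d, b₁ = (n : ℂ) * y)
    (hnd₂ : ∀ n : ℕ, 1 < n → ¬ ∃ y ∈ Oint d, b₂ = (n : ℂ) * y)
    (hcop : ∃ x ∈ Oint d, ∃ y ∈ Oint d, b₂ * x + (b₁ * star b₁) * y = 1) :
    ∀ n : ℕ, 1 < n → ¬ ∃ y ∈ Oint d, b₁ * b₂ = (n : ℂ) * y := by
  have hc := omg_sq d hd
  rintro n hn ⟨y, hy, hxy⟩
  obtain ⟨p, hp, hpn⟩ := Nat.exists_prime_and_dvd (by omega : n ≠ 1)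
  obtain ⟨n', rfl⟩ := hpn
  set w := (n' : ℂ) * y with hw_def
  have hw : w ∈ Oint d := Oint_mul hc (Oint_intcast d n') hy
  have hbw : b₁ * b₂ = (p : ℂ) * w := by rw [hxy]; push_cast; ring
  obtain ⟨x, hx, y', hy', hxy'⟩ := hcop
  obtain ⟨m, hm⟩ := Oint_norm hc h₁
  by_cases hpm : (p : ℤ) ∣ m
  · obtain ⟨k, hk⟩ := hpm
    refine hnd₁ p hp.one_lt ⟨w * x + (k : ℂ) * b₁ * y',
      Oint_add (Oint_mul hc hw hx)
        (Oint_mul hc (Oint_mul hc (Oint_intcast d k) h₁) hy'), ?_⟩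
    have hkC : (m : ℂ) = (p : ℂ) * (k : ℂ) := by exact_mod_cast hk
    linear_combination -b₁ * hxy' + x * hbw + (b₁ * y') * hm + (b₁ * y') * hkC
  · have hpm' : ¬ p ∣ m.natAbs := fun h => hpm ((Int.natAbs_dvd_natAbs.mp (by simpa using h)))
    have hco : IsCoprime (p : ℤ) m := by
      rw [Int.isCoprime_iff_gcd_eq_one]
      exact (Nat.Prime.coprime_iff_not_dvd hp).mpr hpm'
    obtain ⟨u, v, huv⟩ := hco
    have huvC : (u : ℂ) * (p : ℂ) + (v : ℂ) * (m : ℂ) = 1 := by exact_mod_cast huv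
    refine hnd₂ p hp.one_lt ⟨(u : ℂ) * b₂ + (v : ℂ) * (star b₁ * w),
      Oint_add (Oint_mul hc (Oint_intcast d u) h₂)
        (Oint_mul hc (Oint_intcast d v) (Oint_mul hc (Oint_star h₁) hw)), ?_⟩
    linear_combination -b₂ * huvC - ((v : ℂ) * b₂) * hm + ((v : ℂ) * star b₁) * hbw
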